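/- Spectral distance via generalized eigenvalues: for symmetric positive definite matrices A, B on ℝⁿ, sup_{u≠0}|ln⟨Au,u⟩ − ln⟨Bu,u⟩| = max{|ln λ| : λ an eigenvalue of B⁻¹A}. -/

import Mathlib

open scoped Matrix

private lemma spec_iff' {n : ℕ} (C : Matrix (Fin n) (Fin n) ℝ) (μ : ℝ) :
    μ ∈ spectrum ℝ C ↔ ∃ v : Fin n → ℝ, v ≠ 0 ∧ C *ᵥ v = μ • v := by
  rw [← Matrix.spectrum_toEuclideanLin (A := C),
    ← Module.End.hasEigenvalue_iff_mem_spectrum]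
  constructor
  · intro h
    obtain ⟨x, hx⟩ := h.exists_hasEigenvector
    refine ⟨(WithLp.equiv 2 _) x, ?_, ?_⟩
    · simpa using hx.right
    · have := hx.apply_eq_smul
      have := congrArg (WithLp.equiv 2 (Fin n → ℝ)) this
      simpa using this
  · rintro ⟨v, hv, hCv⟩
    refine Module.End.hasEigenvalue_of_hasEigenvector
      (x := (WithLp.equiv 2 (Fin n → ℝ)).symm v) ⟨?_, by simpa using hv⟩
    rw [Module.End.mem_eigenspace_iff]
    show Matrix.toEuclideanLin C _ = _
    rw [show Matrix.toEuclideanLin C ((WithLp.equiv 2 (Fin n → ℝ)).symm v) = WithLp.toLp 2 (C *ᵥ v) from rfl, hCv]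
    simp

open RCLike in
private lemma rayleigh_bounds' {n : ℕ} (C : Matrix (Fin n) (Fin n) ℝ) (hC : C.IsHermitian)
    (hn : 0 < n) :
    ∃ lo hi : ℝ, lo ∈ spectrum ℝ C ∧ hi ∈ spectrum ℝ C ∧
      ∀ v : Fin n → ℝ, v ≠ 0 →
        lo ≤ (v ⬝ᵥ (C *ᵥ v)) / (v ⬝ᵥ v) ∧ (v ⬝ᵥ (C *ᵥ v)) / (v ⬝ᵥ v) ≤ hi := by
  classical
  set E := EuclideanSpace ℝ (Fin n) with hE
  haveI : Nontrivial E := by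
    refine Module.nontrivial_of_finrank_pos (R := ℝ) ?_
    rw [finrank_euclideanSpace_fin]; exact hn
  set T : E →ₗ[ℝ] E := Matrix.toEuclideanLin C with hT
  have hTsym : T.IsSymmetric := Matrix.isHermitian_iff_isSymmetric.mp hC
  have key : ∀ x : {x : E // x ≠ 0},
      re ((inner ℝ (T x.1) x.1 : ℝ)) / ‖(x : E)‖ ^ 2 =
        ((WithLp.equiv 2 (Fin n → ℝ) x.1) ⬝ᵥ (C *ᵥ (WithLp.equiv 2 (Fin n → ℝ) x.1))) /
          ((WithLp.equiv 2 (Fin n → ℝ) x.1) ⬝ᵥ (WithLp.equiv 2 (Fin n → ℝ) x.1)) := by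
    intro x
    have h1 : (inner ℝ (T x.1) x.1 : ℝ) =
        (WithLp.equiv 2 (Fin n → ℝ) x.1) ⬝ᵥ (C *ᵥ (WithLp.equiv 2 (Fin n → ℝ) x.1)) := by
      rw [EuclideanSpace.inner_eq_star_dotProduct, dotProduct_comm]
      simp only [hT, star_trivial]
      exact dotProduct_comm _ _
    have h2 : ‖(x : E)‖ ^ 2 =
        (WithLp.equiv 2 (Fin n → ℝ) x.1) ⬝ᵥ (WithLp.equiv 2 (Fin n → ℝ) x.1) := by
      rw [← real_inner_self_eq_norm_sq, EuclideanSpace.inner_eq_star_dotProduct]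
      simp
    rw [h1, h2]; simp
  set N := ‖LinearMap.toContinuousLinearMap T‖ with hN
  set ray : {x : E // x ≠ 0} → ℝ :=
    fun x => re ((inner ℝ (T x.1) x.1 : ℝ)) / ‖(x : E)‖ ^ 2 with hray
  have habs : ∀ x : {x : E // x ≠ 0}, |ray x| ≤ N := by
    intro x
    have hx0 : (0:ℝ) < ‖(x : E)‖ := norm_pos_iff.mpr x.2
    have h1 : |(inner ℝ (T x.1) x.1 : ℝ)| ≤ ‖T x.1‖ * ‖(x : E)‖ := abs_real_inner_le_norm _ _
    have h2 : ‖T x.1‖ ≤ N * ‖(x : E)‖ := by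
      simpa using (LinearMap.toContinuousLinearMap T).le_opNorm x.1
    have h3 : |(inner ℝ (T x.1) x.1 : ℝ)| ≤ N * ‖(x : E)‖ ^ 2 := by
      calc |(inner ℝ (T x.1) x.1 : ℝ)| ≤ ‖T x.1‖ * ‖(x : E)‖ := h1
        _ ≤ (N * ‖(x : E)‖) * ‖(x : E)‖ := by
            exact mul_le_mul_of_nonneg_right h2 (norm_nonneg _)
        _ = N * ‖(x : E)‖ ^ 2 := by ring
    rw [hray]
    simp only [RCLike.re_to_real]
    rw [abs_div, abs_of_pos (pow_pos hx0 2)]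
    rw [div_le_iff₀ (pow_pos hx0 2)]
    exact h3
  have hbddA : BddAbove (Set.range ray) := by
    refine ⟨N, ?_⟩; rintro _ ⟨x, rfl⟩; exact (abs_le.mp (habs x)).2
  have hbddB : BddBelow (Set.range ray) := by
    refine ⟨-N, ?_⟩; rintro _ ⟨x, rfl⟩; exact (abs_le.mp (habs x)).1
  have hsup := hTsym.hasEigenvalue_iSup_of_finiteDimensional
  have hinf := hTsym.hasEigenvalue_iInf_of_finiteDimensional
  refine ⟨⨅ x, ray x, ⨆ x, ray x, ?_, ?_, ?_⟩
  · rw [← Matrix.spectrum_toEuclideanLin (A := C)]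
    exact hinf.mem_spectrum
  · rw [← Matrix.spectrum_toEuclideanLin (A := C)]
    exact hsup.mem_spectrum
  · intro v hv
    set x : {x : E // x ≠ 0} := ⟨(WithLp.equiv 2 (Fin n → ℝ)).symm v, fun h => hv ((WithLp.toLp_eq_zero (p := 2)).mp h)⟩
      with hx
    have hkey := key x
    have hxv : (WithLp.equiv 2 (Fin n → ℝ)) x.1 = v := by
      rw [hx]; exact (WithLp.equiv 2 (Fin n → ℝ)).apply_symm_apply v
    rw [hxv] at hkey
    constructor
    · rw [← hkey]; exact ciInf_le hbddB x
    · rw [← hkey]; exact le_ciSup hbddA x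

/-- Spectral distance via generalized eigenvalues: for symmetric positive
definite matrices `A, B`, `sup_{u≠0} |ln(uᵀAu) − ln(uᵀBu)|` equals the maximum of
`|ln λ|` over the eigenvalues `λ` of `B⁻¹A`. -/
theorem spectral_distance_eq_max_generalized_eigenvalue
    {n : ℕ} (A B : Matrix (Fin n) (Fin n) ℝ)
    (hA : A.PosDef) (hB : B.PosDef) :
    (⨆ u : {u : Fin n → ℝ // u ≠ 0},
        |Real.log (u.1 ⬝ᵥ A.mulVec u.1) - Real.log (u.1 ⬝ᵥ B.mulVec u.1)|) =
      sSup ((fun μ => |Real.log μ|) '' spectrum ℝ (B⁻¹ * A)) := by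
  classical
  rcases Nat.eq_zero_or_pos n with hn | hn
  · subst hn
    haveI : IsEmpty {u : Fin 0 → ℝ // u ≠ 0} :=
      ⟨fun u => u.2 (Subsingleton.elim _ _)⟩
    have hspec : spectrum ℝ (B⁻¹ * A) = ∅ := by
      ext μ
      simp [spectrum.mem_iff, isUnit_of_subsingleton]
    rw [hspec, Set.image_empty, Real.sSup_empty, Real.iSup_of_isEmpty]
  · haveI : Nonempty {u : Fin n → ℝ // u ≠ 0} := by
      refine ⟨⟨fun _ => 1, ?_⟩⟩
      intro h
      have := congrFun h ⟨0, hn⟩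
      simp at this
    open scoped MatrixOrder in
    set Q := CFC.sqrt B with hQ
    open scoped MatrixOrder in
    have hQherm : Q.IsHermitian := (Matrix.nonneg_iff_posSemidef.mp (CFC.sqrt_nonneg B)).isHermitian
    open scoped MatrixOrder in
    have hQQ : Q * Q = B := CFC.sqrt_mul_sqrt_self B hB.posSemidef.nonneg
    have hQdet : IsUnit Q.det := by
      have h1 : Q.det * Q.det = B.det := by rw [← Matrix.det_mul, hQQ]
      have hBdet := hB.det_pos
      refine isUnit_iff_ne_zero.mpr ?_
      intro h
      rw [h, mul_zero] at h1
      exact hBdet.ne' h1.symm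
    set S := Q⁻¹ with hS
    have hQS : Q * S = 1 := Matrix.mul_nonsing_inv _ hQdet
    have hSQ : S * Q = 1 := Matrix.nonsing_inv_mul _ hQdet
    have hSherm : S.IsHermitian := hQherm.inv
    have hStrans : Sᵀ = S := by
      have h := hSherm
      rwa [Matrix.IsHermitian, Matrix.conjTranspose_eq_transpose_of_trivial] at h
    set C := S * A * S with hC
    have hSBS : S * B * S = 1 := by
      rw [← hQQ]
      calc S * (Q * Q) * S = (S * Q) * (Q * S) := by simp only [Matrix.mul_assoc]
        _ = 1 := by rw [hSQ, hQS, one_mul]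
    have hCherm : C.IsHermitian := by
      show (S * A * S)ᴴ = S * A * S
      rw [Matrix.conjTranspose_mul, Matrix.conjTranspose_mul, hSherm.eq, hA.1.eq,
        ← Matrix.mul_assoc]
    have hquad : ∀ (M : Matrix (Fin n) (Fin n) ℝ) (v : Fin n → ℝ),
        (S *ᵥ v) ⬝ᵥ (M *ᵥ (S *ᵥ v)) = v ⬝ᵥ ((S * M * S) *ᵥ v) := by
      intro M v
      rw [← Matrix.mulVec_mulVec, ← Matrix.mulVec_mulVec, Matrix.dotProduct_mulVec v S,
        ← Matrix.mulVec_transpose, hStrans]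
    have hQunit : IsUnit Q := (Matrix.isUnit_iff_isUnit_det _).2 hQdet
    have hSunit : IsUnit S := ⟨⟨S, Q, hSQ, hQS⟩, rfl⟩
    have hSv : ∀ v : Fin n → ℝ, v ≠ 0 → S *ᵥ v ≠ 0 := by
      intro v hv h
      exact hv (Matrix.mulVec_injective_iff_isUnit.mpr hSunit
        (h.trans (Matrix.mulVec_zero S).symm))
    have hQv : ∀ v : Fin n → ℝ, v ≠ 0 → Q *ᵥ v ≠ 0 := by
      intro v hv h
      exact hv (Matrix.mulVec_injective_iff_isUnit.mpr hQunit
        (h.trans (Matrix.mulVec_zero Q).symm))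
    have hCpos : ∀ v : Fin n → ℝ, v ≠ 0 → 0 < v ⬝ᵥ (C *ᵥ v) := by
      intro v hv
      rw [← hquad A v]
      have := hA.dotProduct_mulVec_pos (hSv v hv)
      simpa using this
    have hvv : ∀ v : Fin n → ℝ, v ≠ 0 → 0 < v ⬝ᵥ v := by
      intro v hv
      have := (Matrix.PosDef.one (n := Fin n) (R := ℝ)).dotProduct_mulVec_pos hv
      simpa using this
    have husub : ∀ u : Fin n → ℝ, S *ᵥ (Q *ᵥ u) = u := by
      intro u
      rw [Matrix.mulVec_mulVec, hSQ, Matrix.one_mulVec]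
    have hvsub : ∀ v : Fin n → ℝ, Q *ᵥ (S *ᵥ v) = v := by
      intro v
      rw [Matrix.mulVec_mulVec, hQS, Matrix.one_mulVec]
    obtain ⟨lo, hi, hlo_mem, hhi_mem, hbound⟩ := rayleigh_bounds' C hCherm hn
    -- spectra coincide
    have hspec : spectrum ℝ (B⁻¹ * A) = spectrum ℝ C := by
      have hBinv : B⁻¹ = S * S := by rw [← hQQ, Matrix.mul_inv_rev]
      have hconj : B⁻¹ * A = S * C * Q := by
        rw [hBinv, hC]
        have h1 : S * (S * A * S) * Q = S * S * A * (S * Q) := by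
          simp only [Matrix.mul_assoc]
        rw [h1, hSQ, mul_one]
      rw [hconj]
      exact spectrum.units_conjugate' (u := ⟨Q, S, hQS, hSQ⟩)
    have heig_ratio : ∀ μ, μ ∈ spectrum ℝ C →
        ∃ v, v ≠ 0 ∧ (v ⬝ᵥ (C *ᵥ v)) / (v ⬝ᵥ v) = μ := by
      intro μ h
      obtain ⟨v, hv, hCv⟩ := (spec_iff' C μ).mp h
      refine ⟨v, hv, ?_⟩
      rw [hCv, dotProduct_smul, smul_eq_mul, mul_div_assoc,
        div_self (hvv v hv).ne', mul_one]
    have hmem_le : ∀ μ ∈ spectrum ℝ C, lo ≤ μ ∧ μ ≤ hi ∧ 0 < μ := by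
      intro μ h
      obtain ⟨v, hv, hr⟩ := heig_ratio μ h
      obtain ⟨h1, h2⟩ := hbound v hv
      exact ⟨hr ▸ h1, hr ▸ h2, hr ▸ div_pos (hCpos v hv) (hvv v hv)⟩
    have hlo_pos : 0 < lo := (hmem_le lo hlo_mem).2.2
    have hhi_pos : 0 < hi := (hmem_le hi hhi_mem).2.2
    set K := max |Real.log lo| |Real.log hi| with hK
    have habs_le : ∀ r : ℝ, lo ≤ r → r ≤ hi → 0 < r → |Real.log r| ≤ K := by
      intro r h1 h2 h0
      rw [abs_le]
      constructor
      · calc -K ≤ -|Real.log lo| := neg_le_neg (le_max_left _ _)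
          _ ≤ Real.log lo := neg_abs_le _
          _ ≤ Real.log r := (Real.log_le_log_iff hlo_pos h0).mpr h1
      · calc Real.log r ≤ Real.log hi := (Real.log_le_log_iff h0 hhi_pos).mpr h2
          _ ≤ |Real.log hi| := le_abs_self _
          _ ≤ K := le_max_right _ _
    set f : {u : Fin n → ℝ // u ≠ 0} → ℝ :=
      fun u => |Real.log (u.1 ⬝ᵥ A.mulVec u.1) - Real.log (u.1 ⬝ᵥ B.mulVec u.1)| with hf
    have hterm : ∀ u : {u : Fin n → ℝ // u ≠ 0},
        f u = |Real.log (((Q *ᵥ u.1) ⬝ᵥ (C *ᵥ (Q *ᵥ u.1))) / ((Q *ᵥ u.1) ⬝ᵥ (Q *ᵥ u.1)))| := by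
      intro u
      have hvne : Q *ᵥ u.1 ≠ 0 := hQv u.1 u.2
      have e1 : u.1 ⬝ᵥ A.mulVec u.1 = (Q *ᵥ u.1) ⬝ᵥ (C *ᵥ (Q *ᵥ u.1)) := by
        conv_lhs => rw [← husub u.1]
        rw [hquad A (Q *ᵥ u.1)]
      have e2 : u.1 ⬝ᵥ B.mulVec u.1 = (Q *ᵥ u.1) ⬝ᵥ (Q *ᵥ u.1) := by
        conv_lhs => rw [← husub u.1]
        rw [hquad B (Q *ᵥ u.1), hSBS, Matrix.one_mulVec]
      simp only [hf]
      rw [e1, e2, Real.log_div (hCpos _ hvne).ne' (hvv _ hvne).ne']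
    have hterm_le : ∀ u : {u : Fin n → ℝ // u ≠ 0}, f u ≤ K := by
      intro u
      rw [hterm u]
      have hvne : Q *ᵥ u.1 ≠ 0 := hQv u.1 u.2
      obtain ⟨h1, h2⟩ := hbound _ hvne
      exact habs_le _ h1 h2 (div_pos (hCpos _ hvne) (hvv _ hvne))
    have hbddL : BddAbove (Set.range f) := by
      refine ⟨K, ?_⟩; rintro _ ⟨u, rfl⟩; exact hterm_le u
    have hattain : ∀ μ, μ ∈ spectrum ℝ C → ∃ u : {u : Fin n → ℝ // u ≠ 0}, f u = |Real.log μ| := by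
      intro μ h
      obtain ⟨v, hv, hr⟩ := heig_ratio μ h
      refine ⟨⟨S *ᵥ v, hSv v hv⟩, ?_⟩
      rw [hterm ⟨S *ᵥ v, hSv v hv⟩]
      simp only [hvsub v]
      rw [hr]
    have hL : (⨆ u : {u : Fin n → ℝ // u ≠ 0}, f u) = K := by
      apply le_antisymm
      · exact ciSup_le hterm_le
      · apply max_le
        · obtain ⟨u, hu⟩ := hattain lo hlo_mem
          rw [← hu]; exact le_ciSup hbddL u
        · obtain ⟨u, hu⟩ := hattain hi hhi_mem
          rw [← hu]; exact le_ciSup hbddL u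
    have hR : sSup ((fun μ => |Real.log μ|) '' spectrum ℝ (B⁻¹ * A)) = K := by
      rw [hspec]
      have hbddR : BddAbove ((fun μ => |Real.log μ|) '' spectrum ℝ C) := by
        refine ⟨K, ?_⟩
        rintro _ ⟨μ, hμ, rfl⟩
        obtain ⟨h1, h2, h0⟩ := hmem_le μ hμ
        exact habs_le μ h1 h2 h0
      apply le_antisymm
      · refine csSup_le ⟨|Real.log hi|, ⟨hi, hhi_mem, rfl⟩⟩ ?_
        rintro _ ⟨μ, hμ, rfl⟩
        obtain ⟨h1, h2, h0⟩ := hmem_le μ hμ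
        exact habs_le μ h1 h2 h0
      · apply max_le
        · exact le_csSup hbddR ⟨lo, hlo_mem, rfl⟩
        · exact le_csSup hbddR ⟨hi, hhi_mem, rfl⟩
    rw [hR]
    exact hL
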